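/- arXiv:2108.01638 — 2 statements merged into one kernel-verified Lean document; each statement's English description precedes it below -/
import Mathlib

section
/- Let L be a locally compact Hausdorff space, Y a uniformly monotone Banach lattice with modulus δ, 0 < η < 1, f₀ ∈ C₀(L) with ‖f₀‖_∞ = 1, and S : C₀(L) → Y a positive bounded linear operator with ‖S‖ = 1 and ‖S(f₀)‖ > 1/(1 + δ(η²)). Let A₁ = {t : f₀(t) < −1 + η/2} and B₁ = {t : f₀(t) > 1 − η/2}. Then for every h in the closed unit ball of C₀(L) vanishing on A₁ ∪ B₁, one has ‖S(h)‖ ≤ 2η. -/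
open scoped ZeroAtInfty

/-- Pointwise absolute value on `C₀(L, ℝ)`. -/
noncomputable def stmt8Abs {L : Type*} [TopologicalSpace L] (f : C₀(L, ℝ)) : C₀(L, ℝ) :=
  ⟨⟨fun t => |f t|, f.continuous.abs⟩, by simpa using f.zero_at_infty'.abs⟩

lemma stmt8Abs_apply {L : Type*} [TopologicalSpace L] (f : C₀(L, ℝ)) (t : L) :
    (stmt8Abs f) t = |f t| := rfl

lemma stmt8_norm_le {L : Type*} [TopologicalSpace L] (f : C₀(L, ℝ)) (C : ℝ) (hC : 0 ≤ C)
    (h : ∀ t, ‖f t‖ ≤ C) : ‖f‖ ≤ C := by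
  rw [← ZeroAtInftyContinuousMap.norm_toBCF_eq_norm]
  exact (BoundedContinuousFunction.norm_le hC).mpr h

lemma stmt8_apply_le_norm {L : Type*} [TopologicalSpace L] (f : C₀(L, ℝ)) (t : L) :
    ‖f t‖ ≤ ‖f‖ := by
  rw [← ZeroAtInftyContinuousMap.norm_toBCF_eq_norm]
  exact f.toBCF.norm_coe_le_norm t

/-- If `Y` is uniformly monotone with modulus `δ`, `S : C₀(L) → Y` is positive of norm one,
`‖f₀‖ = 1` and `‖S f₀‖ > 1/(1 + δ(η²))`, then `‖S h‖ ≤ 2η` for every `h` in the unit ball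
vanishing on `A₁ ∪ B₁ = {f₀ < -1 + η/2} ∪ {f₀ > 1 - η/2}`. -/
theorem stmt_8 {L : Type*} [TopologicalSpace L] [LocallyCompactSpace L] [T2Space L]
    {Y : Type*} [NormedAddCommGroup Y] [Lattice Y] [HasSolidNorm Y]
    [IsOrderedAddMonoid Y] [NormedSpace ℝ Y] [CompleteSpace Y]
    (δ : ℝ → ℝ)
    (hδ : ∀ e : ℝ, 0 < e → e < 1 → 0 < δ e ∧ δ e ≤ e ∧
      ∀ x y : Y, 0 ≤ x → 0 ≤ y → ‖x‖ = 1 → ‖x + y‖ ≤ 1 + δ e → ‖y‖ ≤ e)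
    (η : ℝ) (hη0 : 0 < η) (hη1 : η < 1)
    (f₀ : C₀(L, ℝ)) (hf₀ : ‖f₀‖ = 1)
    (S : C₀(L, ℝ) →L[ℝ] Y) (hSnorm : ‖S‖ = 1)
    (hSpos : ∀ f : C₀(L, ℝ), (∀ t, 0 ≤ f t) → 0 ≤ S f)
    (hSf₀ : ‖S f₀‖ > 1 / (1 + δ (η ^ 2))) :
    ∀ h : C₀(L, ℝ), ‖h‖ ≤ 1 →
      (∀ t, (f₀ t < -1 + η / 2 ∨ 1 - η / 2 < f₀ t) → h t = 0) →
      ‖S h‖ ≤ 2 * η := by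
  intro h hh hzero
  have he0 : (0:ℝ) < η ^ 2 := by positivity
  have he1 : η ^ 2 < 1 := by nlinarith
  obtain ⟨hδpos, hδle, hmod⟩ := hδ (η ^ 2) he0 he1
  -- `‖S f‖ ≤ ‖S (stmt8Abs f)‖` for all `f`
  have key : ∀ f : C₀(L, ℝ), ‖S f‖ ≤ ‖S (stmt8Abs f)‖ := by
    intro f
    have h1 : S f ≤ S (stmt8Abs f) := by
      have := hSpos (stmt8Abs f - f) (fun t => by
        simp only [ZeroAtInftyContinuousMap.sub_apply, stmt8Abs_apply, sub_nonneg]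
        exact le_abs_self _)
      rw [map_sub, sub_nonneg] at this
      exact this
    have h2 : -(S f) ≤ S (stmt8Abs f) := by
      have := hSpos (stmt8Abs f + f) (fun t => by
        simp only [ZeroAtInftyContinuousMap.add_apply, stmt8Abs_apply]
        linarith [neg_abs_le (f t)]
        )
      rw [map_add] at this
      rwa [← sub_neg_eq_add, sub_nonneg] at this
    have habs : |S f| ≤ S (stmt8Abs f) := abs_le'.mpr ⟨h1, h2⟩
    have hpos : (0:Y) ≤ S (stmt8Abs f) :=
      hSpos _ (fun t => by simp [stmt8Abs_apply, abs_nonneg])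
    have : |S f| ≤ |S (stmt8Abs f)| := by rwa [abs_of_nonneg hpos]
    exact HasSolidNorm.solid this
  -- bounds on a := ‖S (stmt8Abs f₀)‖
  set x : Y := S (stmt8Abs f₀) with hx
  set a : ℝ := ‖x‖ with ha
  have hδ1 : (0:ℝ) < 1 + δ (η ^ 2) := by linarith
  have halb : 1 / (1 + δ (η ^ 2)) < a := lt_of_lt_of_le hSf₀ (key f₀)
  have ha0 : 0 < a := lt_trans (by positivity) halb
  have hAbsf₀ : ‖stmt8Abs f₀‖ ≤ 1 := by
    apply stmt8_norm_le _ _ zero_le_one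
    intro t
    have := stmt8_apply_le_norm f₀ t
    rw [hf₀] at this
    simpa [stmt8Abs_apply, Real.norm_eq_abs, abs_abs] using this
  have hale : a ≤ 1 := by
    calc a ≤ ‖S‖ * ‖stmt8Abs f₀‖ := S.le_opNorm _
    _ ≤ 1 := by rw [hSnorm]; linarith
  -- the function g
  set u : C₀(L, ℝ) := (η / 2) • stmt8Abs h with hu
  have hu_app : ∀ t, u t = (η / 2) * |h t| := fun t => rfl
  set y : Y := S u with hy
  have hy0 : (0:Y) ≤ y := hSpos _ (fun t => by
    rw [hu_app]; positivity)
  have hxy : ‖x + y‖ ≤ 1 := by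
    have hmap : x + y = S (stmt8Abs f₀ + u) := by rw [map_add]
    rw [hmap]
    calc ‖S (stmt8Abs f₀ + u)‖ ≤ ‖S‖ * ‖stmt8Abs f₀ + u‖ := S.le_opNorm _
    _ ≤ ‖stmt8Abs f₀ + u‖ := by rw [hSnorm, one_mul]
    _ ≤ 1 := by
        apply stmt8_norm_le _ _ zero_le_one
        intro t
        simp only [ZeroAtInftyContinuousMap.add_apply, stmt8Abs_apply, hu_app,
          Real.norm_eq_abs]
        have hht : |h t| ≤ 1 := by
          have := stmt8_apply_le_norm h t
          rw [Real.norm_eq_abs] at this; linarith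
        by_cases hc : f₀ t < -1 + η / 2 ∨ 1 - η / 2 < f₀ t
        · rw [hzero t hc]
          have hf₀t : |f₀ t| ≤ 1 := by
            have := stmt8_apply_le_norm f₀ t
            rw [hf₀, Real.norm_eq_abs] at this; exact this
          rw [abs_of_nonneg (by positivity)]
          simp only [abs_zero, mul_zero, add_zero]
          exact hf₀t
        · push_neg at hc
          obtain ⟨hc1, hc2⟩ := hc
          have hf₀t : |f₀ t| ≤ 1 - η / 2 := abs_le.mpr ⟨by linarith, hc2⟩
          rw [abs_of_nonneg (by positivity)]
          nlinarith [abs_nonneg (h t), abs_nonneg (f₀ t)]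
  -- apply the modulus to the normalized vectors
  have hx' : a⁻¹ • x = S (a⁻¹ • stmt8Abs f₀) := by rw [map_smul]
  have hy' : a⁻¹ • y = S (a⁻¹ • u) := by rw [map_smul]
  have hx'pos : (0:Y) ≤ a⁻¹ • x := by
    rw [hx']
    exact hSpos _ (fun t => by
      show 0 ≤ a⁻¹ * (stmt8Abs f₀) t
      rw [stmt8Abs_apply]; positivity)
  have hy'pos : (0:Y) ≤ a⁻¹ • y := by
    rw [hy']
    exact hSpos _ (fun t => by
      show 0 ≤ a⁻¹ * u t
      rw [hu_app]; positivity)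
  have hx'norm : ‖a⁻¹ • x‖ = 1 := by
    rw [norm_smul, Real.norm_eq_abs, abs_of_pos (by positivity), ← ha]
    field_simp
  have hsum : ‖a⁻¹ • x + a⁻¹ • y‖ ≤ 1 + δ (η ^ 2) := by
    rw [← smul_add, norm_smul, Real.norm_eq_abs, abs_of_pos (by positivity)]
    have h1 : a⁻¹ < 1 + δ (η ^ 2) := by
      rw [inv_lt_iff_one_lt_mul₀ ha0]
      have : (1:ℝ) = (1 / (1 + δ (η ^ 2))) * (1 + δ (η ^ 2)) := by field_simp
      nlinarith
    calc a⁻¹ * ‖x + y‖ ≤ a⁻¹ * 1 := by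
          apply mul_le_mul_of_nonneg_left hxy (by positivity)
    _ ≤ 1 + δ (η ^ 2) := by rw [mul_one]; exact le_of_lt h1
  have hymod : ‖a⁻¹ • y‖ ≤ η ^ 2 := hmod _ _ hx'pos hy'pos hx'norm hsum
  have hynorm : ‖y‖ ≤ η ^ 2 := by
    have : ‖y‖ = a * ‖a⁻¹ • y‖ := by
      rw [norm_smul, Real.norm_eq_abs, abs_of_pos (by positivity)]
      field_simp
    rw [this]
    calc a * ‖a⁻¹ • y‖ ≤ 1 * (η ^ 2) :=
          mul_le_mul hale hymod (norm_nonneg _) zero_le_one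
    _ = η ^ 2 := one_mul _
  -- conclude
  have hyS : ‖y‖ = (η / 2) * ‖S (stmt8Abs h)‖ := by
    rw [hy, hu, map_smul, norm_smul, Real.norm_eq_abs, abs_of_pos (by positivity)]
  have hSabs : ‖S (stmt8Abs h)‖ ≤ 2 * η := by nlinarith [hyS ▸ hynorm]
  exact le_trans (key h) hSabs
end

section
/- Let L be a locally compact Hausdorff space with at least two points and Y a strictly monotone Banach lattice. If the pair (C₀(L), Y) has the Bishop–Phelps–Bollobás property for positive operators, then Y is uniformly monotone. -/
open Filter Topology Set

section Aux

lemma aux_pow2_smul {Y : Type*} [NormedAddCommGroup Y] [Lattice Y] [HasSolidNorm Y] [IsOrderedAddMonoid Y] :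
    ∀ (k : ℕ) (z : Y), 0 ≤ (2^k) • z → 0 ≤ z := by
  intro k
  induction k with
  | zero => intro z h; simpa using h
  | succ k ih =>
    intro z h
    apply nsmul_two_semiclosed
    apply ih
    rw [smul_smul, ← pow_succ]
    exact h

lemma aux_dyadic_smul_nonneg {Y : Type*} [NormedAddCommGroup Y] [Lattice Y] [HasSolidNorm Y] [IsOrderedAddMonoid Y] [NormedSpace ℝ Y]
    (m k : ℕ) {x : Y} (hx : 0 ≤ x) : 0 ≤ ((m : ℝ)/2^k) • x := by
  apply aux_pow2_smul k
  have h : (2^k : ℕ) • (((m:ℝ)/2^k) • x) = m • x := by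
    rw [← Nat.cast_smul_eq_nsmul ℝ, ← Nat.cast_smul_eq_nsmul ℝ m, smul_smul]
    congr 1
    push_cast
    field_simp
  rw [h]
  exact nsmul_nonneg hx m

lemma aux_smul_nonneg {Y : Type*} [NormedAddCommGroup Y] [Lattice Y] [HasSolidNorm Y] [IsOrderedAddMonoid Y] [NormedSpace ℝ Y]
    {r : ℝ} (hr : 0 ≤ r) {x : Y} (hx : 0 ≤ x) : 0 ≤ r • x := by
  have hb : ∀ n : ℕ, r - (1/2)^n ≤ ((⌊r * 2^n⌋₊ : ℝ)/2^n) ∧ ((⌊r * 2^n⌋₊ : ℝ)/2^n) ≤ r := by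
    intro n
    have h2 : (0:ℝ) < 2^n := by positivity
    constructor
    · have := Nat.lt_floor_add_one (r * 2^n)
      rw [div_pow, one_pow, sub_le_iff_le_add, ← add_div, le_div_iff₀ h2]
      linarith
    · rw [div_le_iff₀ h2]
      exact Nat.floor_le (by positivity)
  have hseq : Tendsto (fun n : ℕ => ((⌊r * 2^n⌋₊ : ℝ)/2^n)) atTop (𝓝 r) := by
    have hg : Tendsto (fun n : ℕ => r - (1/2:ℝ)^n) atTop (𝓝 r) := by
      have : Tendsto (fun n : ℕ => (1/2:ℝ)^n) atTop (𝓝 0) := by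
        apply tendsto_pow_atTop_nhds_zero_of_lt_one <;> norm_num
      simpa using tendsto_const_nhds.sub this
    exact tendsto_of_tendsto_of_tendsto_of_le_of_le hg tendsto_const_nhds
      (fun n => (hb n).1) (fun n => (hb n).2)
  have h2 : Tendsto (fun n : ℕ => ((⌊r * 2^n⌋₊:ℝ)/2^n) • x) atTop (𝓝 (r • x)) :=
    hseq.smul_const x
  exact isClosed_nonneg.mem_of_tendsto h2
    (Filter.Eventually.of_forall (fun n => aux_dyadic_smul_nonneg _ _ hx))

lemma aux_smul_mono {Y : Type*} [NormedAddCommGroup Y] [Lattice Y] [HasSolidNorm Y] [IsOrderedAddMonoid Y] [NormedSpace ℝ Y]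
    {a b : ℝ} (hab : a ≤ b) {x : Y} (hx : 0 ≤ x) : a • x ≤ b • x := by
  have := aux_smul_nonneg (sub_nonneg.mpr hab) hx
  rw [sub_smul] at this
  exact sub_nonneg.mp this

end Aux

open scoped ZeroAtInfty
open ZeroAtInftyContinuousMap

section C0

variable {L : Type*} [TopologicalSpace L]

noncomputable def ofCS (f : C(L, ℝ)) (hf : HasCompactSupport f) : C₀(L, ℝ) :=
  ⟨f, hf.is_zero_at_infty⟩

@[simp] lemma ofCS_apply (f : C(L, ℝ)) (hf : HasCompactSupport f) (t : L) :
    ofCS f hf t = f t := rfl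

noncomputable def absC0 (f : C₀(L, ℝ)) : C₀(L, ℝ) :=
  ⟨⟨fun t => |f t|, (map_continuous f).abs⟩, by
    simpa using (zero_at_infty f).abs⟩

@[simp] lemma absC0_apply (f : C₀(L, ℝ)) (t : L) : absC0 f t = |f t| := rfl

noncomputable def maxC0 (f g : C₀(L, ℝ)) : C₀(L, ℝ) :=
  ⟨⟨fun t => max (f t) (g t), (map_continuous f).max (map_continuous g)⟩, by
    simpa using (zero_at_infty f).max (zero_at_infty g)⟩

@[simp] lemma maxC0_apply (f g : C₀(L, ℝ)) (t : L) : maxC0 f g t = max (f t) (g t) := rfl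

noncomputable def minC0 (f g : C₀(L, ℝ)) : C₀(L, ℝ) :=
  ⟨⟨fun t => min (f t) (g t), (map_continuous f).min (map_continuous g)⟩, by
    simpa using (zero_at_infty f).min (zero_at_infty g)⟩

@[simp] lemma minC0_apply (f g : C₀(L, ℝ)) (t : L) : minC0 f g t = min (f t) (g t) := rfl

lemma C0_abs_apply_le_norm (f : C₀(L, ℝ)) (t : L) : |f t| ≤ ‖f‖ := by
  simpa [Real.norm_eq_abs] using BoundedContinuousFunction.norm_coe_le_norm f.toBCF t

lemma C0_norm_le {f : C₀(L, ℝ)} {C : ℝ} (hC : 0 ≤ C) (h : ∀ t, |f t| ≤ C) : ‖f‖ ≤ C := by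
  rw [← ZeroAtInftyContinuousMap.norm_toBCF_eq_norm]
  exact (BoundedContinuousFunction.norm_le hC).mpr (fun t => by
    simpa [Real.norm_eq_abs] using h t)

end C0

section Op

variable {L : Type*} [TopologicalSpace L]
variable {Y : Type*} [NormedAddCommGroup Y] [Lattice Y] [HasSolidNorm Y] [IsOrderedAddMonoid Y] [NormedSpace ℝ Y]

noncomputable def opS (t₁ t₂ : L) (x y : Y) : C₀(L, ℝ) →L[ℝ] Y :=
  LinearMap.mkContinuous
    { toFun := fun f => f t₁ • x + f t₂ • y
      map_add' := by
        intro f g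
        simp [add_smul]
        abel
      map_smul' := by
        intro c f
        simp [smul_smul, smul_add] }
    (‖x‖ + ‖y‖)
    (fun f => by
      simp only [LinearMap.coe_mk, AddHom.coe_mk]
      calc ‖f t₁ • x + f t₂ • y‖ ≤ ‖f t₁ • x‖ + ‖f t₂ • y‖ := norm_add_le _ _
        _ = |f t₁| * ‖x‖ + |f t₂| * ‖y‖ := by rw [norm_smul, norm_smul]; simp [Real.norm_eq_abs]
        _ ≤ ‖f‖ * ‖x‖ + ‖f‖ * ‖y‖ := by
            gcongr <;> [exact C0_abs_apply_le_norm f t₁; exact C0_abs_apply_le_norm f t₂]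
        _ = (‖x‖ + ‖y‖) * ‖f‖ := by ring)

@[simp] lemma opS_apply (t₁ t₂ : L) (x y : Y) (f : C₀(L, ℝ)) :
    opS t₁ t₂ x y f = f t₁ • x + f t₂ • y := rfl

end Op

section OpNorm

variable {L : Type*} [TopologicalSpace L]
variable {Y : Type*} [NormedAddCommGroup Y] [Lattice Y] [HasSolidNorm Y] [IsOrderedAddMonoid Y] [NormedSpace ℝ Y]

lemma opS_abs_le (t₁ t₂ : L) {x y : Y} (hx : 0 ≤ x) (hy : 0 ≤ y) (f : C₀(L, ℝ)) :
    |opS t₁ t₂ x y f| ≤ ‖f‖ • (x + y) := by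
  rw [opS_apply, abs_le', smul_add]
  have hb₁ := abs_le.mp (C0_abs_apply_le_norm f t₁)
  have hb₂ := abs_le.mp (C0_abs_apply_le_norm f t₂)
  constructor
  · exact add_le_add (aux_smul_mono hb₁.2 hx) (aux_smul_mono hb₂.2 hy)
  · rw [neg_add, ← neg_smul, ← neg_smul]
    exact add_le_add (aux_smul_mono (by linarith [hb₁.1] : -f t₁ ≤ ‖f‖) hx)
      (aux_smul_mono (by linarith [hb₂.1] : -f t₂ ≤ ‖f‖) hy)

lemma opS_norm_apply_le (t₁ t₂ : L) {x y : Y} (hx : 0 ≤ x) (hy : 0 ≤ y) (f : C₀(L, ℝ)) :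
    ‖opS t₁ t₂ x y f‖ ≤ ‖f‖ * ‖x + y‖ := by
  have h := opS_abs_le t₁ t₂ hx hy f
  have h0 : 0 ≤ ‖f‖ • (x + y) := aux_smul_nonneg (norm_nonneg f) (add_nonneg hx hy)
  have h2 : ‖opS t₁ t₂ x y f‖ ≤ ‖‖f‖ • (x + y)‖ := by
    apply norm_le_norm_of_abs_le_abs
    rwa [abs_of_nonneg h0]
  rwa [norm_smul, Real.norm_eq_abs, abs_of_nonneg (norm_nonneg f)] at h2

end OpNorm

set_option maxHeartbeats 1600000 in
/-- If `L` is a locally compact Hausdorff space with at least two points, `Y` a strictly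
monotone Banach lattice, and the pair `(C₀(L), Y)` has the Bishop–Phelps–Bollobás property
for positive operators, then `Y` is uniformly monotone. -/
theorem stmt_14 {L : Type*} [TopologicalSpace L] [LocallyCompactSpace L] [T2Space L]
    [Nontrivial L]
    {Y : Type*} [NormedAddCommGroup Y] [Lattice Y] [HasSolidNorm Y]
    [IsOrderedAddMonoid Y] [NormedSpace ℝ Y] [CompleteSpace Y]
    (hSM : ∀ x y : Y, 0 ≤ x → x ≤ y → x ≠ y → ‖x‖ < ‖y‖)
    (hBPB : ∀ ε : ℝ, 0 < ε → ε < 1 → ∃ η : ℝ, 0 < η ∧ η < ε ∧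
      ∀ S : C₀(L, ℝ) →L[ℝ] Y, ‖S‖ = 1 → (∀ f : C₀(L, ℝ), (∀ t, 0 ≤ f t) → 0 ≤ S f) →
      ∀ x₀ : C₀(L, ℝ), ‖x₀‖ = 1 → ‖S x₀‖ > 1 - η →
      ∃ (u₀ : C₀(L, ℝ)) (T : C₀(L, ℝ) →L[ℝ] Y),
        ‖u₀‖ = 1 ∧ ‖T‖ = 1 ∧ (∀ f : C₀(L, ℝ), (∀ t, 0 ≤ f t) → 0 ≤ T f) ∧
        ‖T u₀‖ = 1 ∧ ‖u₀ - x₀‖ < ε ∧ ‖T - S‖ < ε) :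
    ∀ ε : ℝ, 0 < ε → ε < 1 → ∃ δ : ℝ, 0 < δ ∧ δ ≤ ε ∧
      ∀ x y : Y, 0 ≤ x → 0 ≤ y → ‖x‖ = 1 → ‖x + y‖ ≤ 1 + δ → ‖y‖ ≤ ε := by
  intro ε hε hε1
  have hε4 : 0 < ε/4 := by linarith
  obtain ⟨η, hη0, hηlt, hkey⟩ := hBPB (ε/4) hε4 (by linarith)
  have hη1 : η < 1 := by linarith
  set δ := min (η/2) ε with hδdef
  have hδη : δ ≤ η/2 := min_le_left _ _
  have hδε : δ ≤ ε := min_le_right _ _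
  have hδ0 : 0 < δ := lt_min (by linarith) hε
  refine ⟨δ, hδ0, hδε, ?_⟩
  intro x y hx hy hnx hxy
  -- two points and bump functions
  obtain ⟨t₁, t₂, htt⟩ := exists_pair_ne L
  obtain ⟨U₁, U₂, hU₁, hU₂, ht₁, ht₂, hUd⟩ := t2_separation htt
  obtain ⟨f₁, hf₁1, hf₁0, hf₁c, hf₁01⟩ :=
    exists_continuous_one_zero_of_isCompact (isCompact_singleton : IsCompact {t₁})
      hU₁.isClosed_compl (Set.disjoint_singleton_left.mpr (by simpa using ht₁))
  obtain ⟨f₂, hf₂1, hf₂0, hf₂c, hf₂01⟩ :=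
    exists_continuous_one_zero_of_isCompact (isCompact_singleton : IsCompact {t₂})
      hU₂.isClosed_compl (Set.disjoint_singleton_left.mpr (by simpa using ht₂))
  set e₁ : C₀(L, ℝ) := ofCS f₁ hf₁c with he₁def
  set e₂ : C₀(L, ℝ) := ofCS f₂ hf₂c with he₂def
  have he₁app : ∀ t, e₁ t = f₁ t := fun _ => rfl
  have he₂app : ∀ t, e₂ t = f₂ t := fun _ => rfl
  have he₁t₁ : f₁ t₁ = 1 := by simpa using hf₁1 (Set.mem_singleton t₁)
  have he₂t₂ : f₂ t₂ = 1 := by simpa using hf₂1 (Set.mem_singleton t₂)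
  have hf₁z : ∀ t, t ∉ U₁ → f₁ t = 0 := fun t ht => by simpa using hf₁0 ht
  have hf₂z : ∀ t, t ∉ U₂ → f₂ t = 0 := fun t ht => by simpa using hf₂0 ht
  have hdisj : ∀ t, f₁ t = 0 ∨ f₂ t = 0 := by
    intro t
    by_cases h : t ∈ U₂
    · exact Or.inl (hf₁z t (fun hmem => (Set.disjoint_left.mp hUd hmem) h))
    · exact Or.inr (hf₂z t h)
  have hf₁t₂ : f₁ t₂ = 0 := (hdisj t₂).resolve_right (by rw [he₂t₂]; norm_num)
  have hf₂t₁ : f₂ t₁ = 0 := by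
    rcases hdisj t₁ with h | h
    · rw [he₁t₁] at h; norm_num at h
    · exact h
  have he₁norm : ‖e₁‖ = 1 := by
    apply le_antisymm
    · apply C0_norm_le zero_le_one
      intro t
      rw [he₁app t]
      exact abs_le.mpr ⟨by linarith [(hf₁01 t).1], (hf₁01 t).2⟩
    · calc (1:ℝ) = |e₁ t₁| := by rw [he₁app, he₁t₁]; norm_num
        _ ≤ ‖e₁‖ := C0_abs_apply_le_norm e₁ t₁
  have he₂norm_le : ‖e₂‖ ≤ 1 := by
    apply C0_norm_le zero_le_one
    intro t
    rw [he₂app t]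
    exact abs_le.mpr ⟨by linarith [(hf₂01 t).1], (hf₂01 t).2⟩
  set N := ‖x + y‖ with hNdef
  have hN1 : 1 ≤ N := by
    rw [← hnx]
    apply norm_le_norm_of_abs_le_abs
    rw [abs_of_nonneg hx, abs_of_nonneg (add_nonneg hx hy)]
    exact le_add_of_nonneg_right hy
  have hN0 : (0:ℝ) < N := by linarith
  have hNi0 : (0:ℝ) ≤ N⁻¹ := inv_nonneg.mpr hN0.le
  set x' := N⁻¹ • x with hx'def
  set y' := N⁻¹ • y with hy'def
  have hx'0 : 0 ≤ x' := aux_smul_nonneg hNi0 hx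
  have hy'0 : 0 ≤ y' := aux_smul_nonneg hNi0 hy
  have hNinv : ‖(N:ℝ)⁻¹‖ = N⁻¹ := by
    rw [Real.norm_eq_abs, abs_of_nonneg hNi0]
  have hx'y' : ‖x' + y'‖ = 1 := by
    rw [hx'def, hy'def, ← smul_add, norm_smul, hNinv, ← hNdef, inv_mul_cancel₀ hN0.ne']
  have hx'norm : ‖x'‖ = N⁻¹ := by rw [hx'def, norm_smul, hNinv, hnx, mul_one]
  have hy'norm : ‖y'‖ = N⁻¹ * ‖y‖ := by rw [hy'def, norm_smul, hNinv]
  set S := opS t₁ t₂ x' y' with hSdef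
  have hSle : ‖S‖ ≤ 1 := ContinuousLinearMap.opNorm_le_bound _ zero_le_one (fun f => by
    rw [one_mul]
    calc ‖S f‖ ≤ ‖f‖ * ‖x' + y'‖ := opS_norm_apply_le t₁ t₂ hx'0 hy'0 f
      _ = ‖f‖ := by rw [hx'y', mul_one])
  have huapp₁ : (e₁ + e₂) t₁ = 1 := by
    show f₁ t₁ + f₂ t₁ = 1
    rw [he₁t₁, hf₂t₁]; ring
  have huapp₂ : (e₁ + e₂) t₂ = 1 := by
    show f₁ t₂ + f₂ t₂ = 1
    rw [he₂t₂, hf₁t₂]; ring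
  have hu : ‖e₁ + e₂‖ = 1 := by
    apply le_antisymm
    · apply C0_norm_le zero_le_one
      intro t
      have h : (e₁ + e₂) t = f₁ t + f₂ t := rfl
      rw [h]
      rcases hdisj t with hz | hz
      · rw [hz, zero_add]
        exact abs_le.mpr ⟨by linarith [(hf₂01 t).1], (hf₂01 t).2⟩
      · rw [hz, add_zero]
        exact abs_le.mpr ⟨by linarith [(hf₁01 t).1], (hf₁01 t).2⟩
    · calc (1:ℝ) = |(e₁ + e₂) t₁| := by rw [huapp₁]; norm_num
        _ ≤ ‖e₁ + e₂‖ := C0_abs_apply_le_norm _ t₁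
  have hSu : S (e₁ + e₂) = x' + y' := by
    rw [hSdef, opS_apply, huapp₁, huapp₂, one_smul, one_smul]
  have hSnorm : ‖S‖ = 1 := by
    apply le_antisymm hSle
    calc (1:ℝ) = ‖S (e₁ + e₂)‖ := by rw [hSu, hx'y']
      _ ≤ ‖S‖ * ‖e₁ + e₂‖ := S.le_opNorm _
      _ = ‖S‖ := by rw [hu, mul_one]
  have hSpos : ∀ f : C₀(L, ℝ), (∀ t, 0 ≤ f t) → 0 ≤ S f := by
    intro f hf
    rw [hSdef, opS_apply]
    exact add_nonneg (aux_smul_nonneg (hf t₁) hx'0) (aux_smul_nonneg (hf t₂) hy'0)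
  have hSe₁ : S e₁ = x' := by
    rw [hSdef, opS_apply, he₁app, he₁app, he₁t₁, hf₁t₂, one_smul, zero_smul, add_zero]
  have hSe₂ : S e₂ = y' := by
    rw [hSdef, opS_apply, he₂app, he₂app, he₂t₂, hf₂t₁, one_smul, zero_smul, zero_add]
  have hgt : ‖S e₁‖ > 1 - η := by
    rw [hSe₁, hx'norm, gt_iff_lt, show (N:ℝ)⁻¹ = 1 / N by rw [one_div], lt_div_iff₀ hN0]
    have hNle : N ≤ 1 + δ := hxy
    have hq : (1 - η) * (1 + η/2) < 1 := by
      have hee : (1 - η) * (1 + η/2) = 1 - η/2 - η*η/2 := by ring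
      rw [hee]
      linarith [mul_pos hη0 hη0]
    calc (1 - η) * N ≤ (1 - η) * (1 + δ) :=
          mul_le_mul_of_nonneg_left hNle (by linarith)
      _ ≤ (1 - η) * (1 + η/2) := mul_le_mul_of_nonneg_left (by linarith) (by linarith)
      _ < 1 := hq
  obtain ⟨u₀, T, hu₀n, hTn, hTpos, hTu₀, hclose, hTS⟩ := hkey S hSnorm hSpos e₁ he₁norm hgt
  set v := absC0 u₀ with hvdef
  have hvapp : ∀ t, v t = |u₀ t| := fun _ => rfl
  have hvnorm_le : ‖v‖ ≤ 1 := by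
    apply C0_norm_le zero_le_one
    intro t
    rw [hvapp t, abs_abs, ← hu₀n]
    exact C0_abs_apply_le_norm u₀ t
  have hTvT : |T u₀| ≤ T v := by
    rw [abs_le']
    constructor
    · have h := hTpos (v - u₀) (fun t => by
        have hh : (v - u₀) t = |u₀ t| - u₀ t := rfl
        rw [hh]
        linarith [le_abs_self (u₀ t)])
      rw [map_sub] at h
      exact sub_nonneg.mp h
    · have h := hTpos (v + u₀) (fun t => by
        have hh : (v + u₀) t = |u₀ t| + u₀ t := rfl
        rw [hh]
        linarith [neg_abs_le (u₀ t)])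
      rw [map_add] at h
      rw [← sub_nonneg, sub_neg_eq_add]
      exact h
  have hTv0 : 0 ≤ T v := le_trans (abs_nonneg _) hTvT
  have hTvnorm : ‖T v‖ = 1 := by
    apply le_antisymm
    · calc ‖T v‖ ≤ ‖T‖ * ‖v‖ := T.le_opNorm v
        _ ≤ 1 := by rw [hTn, one_mul]; exact hvnorm_le
    · calc (1:ℝ) = ‖T u₀‖ := hTu₀.symm
        _ = ‖|T u₀|‖ := (norm_abs_eq_norm _).symm
        _ ≤ ‖T v‖ := norm_le_norm_of_abs_le_abs (by
            rw [abs_abs, abs_of_nonneg hTv0]; exact hTvT)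
  set g := maxC0 v e₂ with hgdef
  have hgnorm_le : ‖g‖ ≤ 1 := by
    apply C0_norm_le zero_le_one
    intro t
    have h : g t = max |u₀ t| (f₂ t) := rfl
    have h1 : |u₀ t| ≤ 1 := by rw [← hu₀n]; exact C0_abs_apply_le_norm u₀ t
    rw [h, abs_le]
    refine ⟨?_, max_le h1 (hf₂01 t).2⟩
    have h0 : (0:ℝ) ≤ max |u₀ t| (f₂ t) := le_max_of_le_left (abs_nonneg _)
    linarith
  have hTvg : T v ≤ T g := by
    have h := hTpos (g - v) (fun t => by
      have hh : (g - v) t = max |u₀ t| (f₂ t) - |u₀ t| := rfl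
      rw [hh, sub_nonneg]
      exact le_max_left _ _)
    rw [map_sub] at h
    exact sub_nonneg.mp h
  have hTgv : T g = T v := by
    by_contra hne
    have hlt := hSM (T v) (T g) hTv0 hTvg (fun hEq => hne hEq.symm)
    have hle : ‖T g‖ ≤ 1 := by
      calc ‖T g‖ ≤ ‖T‖ * ‖g‖ := T.le_opNorm g
        _ ≤ 1 := by rw [hTn, one_mul]; exact hgnorm_le
    rw [hTvnorm] at hlt
    linarith
  have hTgv0 : T (g - v) = 0 := by rw [map_sub, hTgv, sub_self]
  set m := minC0 e₂ v with hmdef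
  have he₂eq : e₂ = (g - v) + m := by
    ext t
    have h1 : ((g - v) + m) t = (max |u₀ t| (f₂ t) - |u₀ t|) + min (f₂ t) |u₀ t| := rfl
    have h2 : e₂ t = f₂ t := rfl
    rw [h1, h2]
    rcases le_total (f₂ t) |u₀ t| with h | h
    · rw [max_eq_left h, min_eq_left h]; ring
    · rw [max_eq_right h, min_eq_right h]; ring
  have hTe₂ : T e₂ = T m := by rw [he₂eq, map_add, hTgv0, zero_add]
  have hmnorm : ‖m‖ ≤ ε/4 := by
    apply C0_norm_le (by linarith)
    intro t
    have h : m t = min (f₂ t) |u₀ t| := rfl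
    have hm0 : (0:ℝ) ≤ min (f₂ t) |u₀ t| := le_min (hf₂01 t).1 (abs_nonneg _)
    rw [h, abs_le]
    refine ⟨by linarith, ?_⟩
    rcases eq_or_ne (f₂ t) 0 with hz | hz
    · calc min (f₂ t) |u₀ t| ≤ f₂ t := min_le_left _ _
        _ ≤ ε/4 := by rw [hz]; linarith
    · have hf₁t : f₁ t = 0 := (hdisj t).resolve_right hz
      have hu₀t : |u₀ t| < ε/4 := by
        have hb := C0_abs_apply_le_norm (u₀ - e₁) t
        have happ : (u₀ - e₁) t = u₀ t - f₁ t := rfl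
        rw [happ, hf₁t, sub_zero] at hb
        linarith
      calc min (f₂ t) |u₀ t| ≤ |u₀ t| := min_le_right _ _
        _ ≤ ε/4 := hu₀t.le
  have hTe₂norm : ‖T e₂‖ ≤ ε/4 := by
    rw [hTe₂]
    calc ‖T m‖ ≤ ‖T‖ * ‖m‖ := T.le_opNorm m
      _ ≤ ε/4 := by rw [hTn, one_mul]; exact hmnorm
  have hSTe₂ : ‖S e₂ - T e₂‖ ≤ ε/4 := by
    calc ‖S e₂ - T e₂‖ = ‖T e₂ - S e₂‖ := norm_sub_rev _ _
      _ = ‖(T - S) e₂‖ := by rw [ContinuousLinearMap.sub_apply]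
      _ ≤ ‖T - S‖ * ‖e₂‖ := (T - S).le_opNorm e₂
      _ ≤ (ε/4) * 1 := mul_le_mul hTS.le he₂norm_le (norm_nonneg _) (by linarith)
      _ = ε/4 := mul_one _
  have hfinal : ‖S e₂‖ ≤ ε/2 := by
    calc ‖S e₂‖ = ‖(S e₂ - T e₂) + T e₂‖ := by rw [sub_add_cancel]
      _ ≤ ‖S e₂ - T e₂‖ + ‖T e₂‖ := norm_add_le _ _
      _ ≤ ε/4 + ε/4 := add_le_add hSTe₂ hTe₂norm
      _ = ε/2 := by ring
  have hSe₂norm : ‖S e₂‖ = N⁻¹ * ‖y‖ := by rw [hSe₂, hy'norm]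
  have hyval : ‖y‖ = N * ‖S e₂‖ := by
    rw [hSe₂norm, ← mul_assoc, mul_inv_cancel₀ hN0.ne', one_mul]
  have hNle : N ≤ 1 + δ := hxy
  have h1 : N * ‖S e₂‖ ≤ (1 + δ) * ‖S e₂‖ :=
    mul_le_mul_of_nonneg_right hNle (norm_nonneg _)
  have h2 : (1 + δ) * ‖S e₂‖ ≤ (1 + δ) * (ε/2) :=
    mul_le_mul_of_nonneg_left hfinal (by linarith)
  have h3 : (1 + δ) * (ε/2) ≤ ε := by
    have hde : δ * ε ≤ 1 * ε := mul_le_mul_of_nonneg_right (show δ ≤ 1 by linarith) hε.le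
    rw [one_mul] at hde
    have hee : (1 + δ) * (ε/2) = ε/2 + δ*ε/2 := by ring
    rw [hee]
    linarith
  linarith [hyval, h1, h2, h3]
end
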